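/- Remark 1.4 (equivalence of the two definitions of essential connectivity, (ec) and (ec2)): the infimum in ℕ ∪ {∞} of k_Z over all nonempty proper subsets Z ⊆ V such that NO pair (i, j) with i ∈ Z, j ∉ Z and m i j > 0 is separating, equals the infimum of k_Z over all nonempty proper subsets Z ⊆ V such that SOME pair (i, j) with i ∈ Z, j ∉ Z and m i j > 0 is not separating (both infima taken with inf ∅ = ∞). -/

import Mathlib

open Finset

variable {V : Type*}

/-- The multidegree of a divisor `D` on the nodal curve with dual multigraph `m`:
`(deg D) j = ∑ i, (D i - D j) * m i j`. -/
def mdeg [Fintype V] (m : V → V → ℕ) (D : V → ℤ) : V → ℤ :=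
  fun j => ∑ i, (D i - D j) * (m i j : ℤ)

/-- `k_Z`: the number of nodes where the subcurve `Z` meets its complementary curve. -/
def kdeg [Fintype V] [DecidableEq V] (m : V → V → ℕ) (Z : Finset V) : ℕ :=
  ∑ i ∈ Z, ∑ j ∈ Zᶜ, m i j

/-- The pair `(i, j)` (with `m i j > 0`) corresponds to a separating node:
`m i j = 1` and the edge `{i, j}` is a bridge of `G`. -/
def Separating (m : V → V → ℕ) (G : SimpleGraph V) (i j : V) : Prop :=
  m i j = 1 ∧ G.IsBridge s(i, j)

/-- A tail: a nonempty proper subcurve meeting its complement in a single node. -/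
def IsTail [Fintype V] [DecidableEq V] (m : V → V → ℕ) (Q : Finset V) : Prop :=
  Q.Nonempty ∧ Q ≠ Finset.univ ∧ kdeg m Q = 1

/-- A divisor is a sum of tails if `D = c·1_V + ∑ h a_h · 1_{Q_h}` with the `Q_h` tails. -/
def SumOfTails [Fintype V] [DecidableEq V] (m : V → V → ℕ) (D : V → ℤ) : Prop :=
  ∃ (c : ℤ) (k : ℕ) (a : Fin k → ℤ) (Q : Fin k → Finset V),
    (∀ h, IsTail m (Q h)) ∧
    ∀ i, D i = c + ∑ h, a h * (if i ∈ Q h then 1 else 0)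

/-- `Λ_X`: the group of multidegrees of twisters, i.e. the image of `mdeg`. -/
def Lambda [Fintype V] (m : V → V → ℕ) : Set (V → ℤ) := Set.range (mdeg m)

/-- `Λ_X^0`: multidegrees of sums of tails. -/
def Lambda0 [Fintype V] [DecidableEq V] (m : V → V → ℕ) : Set (V → ℤ) :=
  {t | ∃ D, SumOfTails m D ∧ mdeg m D = t}

/-- The essential connectivity `ε(X)`: the infimum of `k_Z` over nonempty proper `Z ⊆ V`
such that some pair `(i,j)` with `i ∈ Z`, `j ∉ Z`, `m i j > 0` is not separating. -/
noncomputable def eps [Fintype V] [DecidableEq V] (m : V → V → ℕ) (G : SimpleGraph V) : ℕ∞ :=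
  sInf ((fun Z : Finset V => (kdeg m Z : ℕ∞)) ''
    {Z | Z.Nonempty ∧ Z ≠ Finset.univ ∧
      ∃ i ∈ Z, ∃ j, j ∉ Z ∧ 0 < m i j ∧ ¬ Separating m G i j})



section Aux

variable [Fintype V] [DecidableEq V]

lemma kdeg_eq_sum_filter (m : V → V → ℕ) (Z : Finset V) :
    kdeg m Z = ∑ p ∈ (Z ×ˢ Zᶜ).filter (fun p => m p.1 p.2 ≠ 0), m p.1 p.2 := by
  rw [Finset.sum_filter_ne_zero, kdeg, Finset.sum_product]

lemma walk_cross (G : SimpleGraph V) (Z : Finset V) :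
    ∀ {u v : V}, G.Walk u v → u ∈ Z → v ∉ Z → ∃ a ∈ Z, ∃ b, b ∉ Z ∧ G.Adj a b := by
  intro u v p
  induction p with
  | nil => intro h h'; exact absurd h h'
  | @cons u w v h p ih =>
    intro hu hv
    by_cases hw : w ∈ Z
    · exact ih hw hv
    · exact ⟨u, hu, w, hw, h⟩

lemma exists_cross (m : V → V → ℕ) (G : SimpleGraph V)
    (hG : ∀ i j, G.Adj i j ↔ i ≠ j ∧ 0 < m i j) (hconn : G.Connected)
    (Z : Finset V) (hne : Z.Nonempty) (hpr : Z ≠ univ) :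
    ∃ i ∈ Z, ∃ j, j ∉ Z ∧ 0 < m i j := by
  obtain ⟨u, hu⟩ := hne
  obtain ⟨v, hv⟩ : ∃ v, v ∉ Z := by
    by_contra h; push_neg at h; exact hpr (Finset.eq_univ_iff_forall.2 h)
  obtain ⟨w⟩ := hconn.preconnected u v
  obtain ⟨a, ha, b, hb, hadj⟩ := walk_cross G Z w hu hv
  exact ⟨a, ha, b, hb, ((hG a b).1 hadj).2⟩

/-- The key construction step: if `Z` has some non-separating boundary pair but also
a separating one, one can modify `Z` to strictly decrease `kdeg` while keeping a
non-separating boundary pair. -/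
lemma step (m : V → V → ℕ) (hsym : ∀ i j, m i j = m j i) (hdiag : ∀ i, m i i = 0)
    (G : SimpleGraph V) (hG : ∀ i j, G.Adj i j ↔ i ≠ j ∧ 0 < m i j)
    (Z : Finset V) (hne : Z.Nonempty) (hpr : Z ≠ univ)
    (hwit : ∃ i ∈ Z, ∃ j, j ∉ Z ∧ 0 < m i j ∧ ¬ Separating m G i j)
    (hsep : ∃ i ∈ Z, ∃ j, j ∉ Z ∧ 0 < m i j ∧ Separating m G i j) :
    ∃ W : Finset V, W.Nonempty ∧ W ≠ univ ∧
      (∃ i ∈ W, ∃ j, j ∉ W ∧ 0 < m i j ∧ ¬ Separating m G i j) ∧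
      kdeg m W < kdeg m Z := by
  classical
  obtain ⟨i₀, hi₀, j₀, hj₀, hm₀, hns₀⟩ := hwit
  obtain ⟨i, hi, j, hj, hmij, hone, hbr⟩ := hsep
  set G' := G \ SimpleGraph.fromEdgeSet {s(i, j)} with hG'
  have hbr' := (SimpleGraph.isBridge_iff).1 hbr
  have hnr : ¬ G'.Reachable i j := hbr'
  -- the component of `j` in `G'`
  set C : Finset V := univ.filter (fun v => G'.Reachable j v) with hC
  have hmemC : ∀ v, v ∈ C ↔ G'.Reachable j v := by
    intro v; simp [hC]
  have hjC : j ∈ C := (hmemC j).2 (SimpleGraph.Reachable.refl j)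
  have hiC : i ∉ C := fun h => hnr ((hmemC i).1 h).symm
  have hclosed : ∀ a b, a ∈ C → G'.Adj a b → b ∈ C := by
    intro a b ha hab
    exact (hmemC b).2 (((hmemC a).1 ha).trans hab.reachable)
  have hedge : ∀ a b, 0 < m a b → s(a, b) ≠ s(i, j) → G'.Adj a b := by
    intro a b hab hne'
    have hab' : a ≠ b := by
      intro h; subst h; rw [hdiag] at hab; omega
    refine (SimpleGraph.sdiff_adj _ _ _ _).2 ⟨(hG a b).2 ⟨hab', hab⟩, ?_⟩
    intro h
    exact hne' (by simpa using (SimpleGraph.fromEdgeSet_adj _).1 h |>.1)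
  have hne_e : s(i₀, j₀) ≠ s(i, j) := by
    intro h
    rcases Sym2.eq_iff.1 h with ⟨h1, h2⟩ | ⟨h1, h2⟩
    · subst h1; subst h2; exact hns₀ ⟨hone, hbr⟩
    · subst h1; subst h2
      refine hns₀ ⟨by rw [hsym]; exact hone, ?_⟩
      rwa [Sym2.eq_swap]
  have hadj₀ : G'.Adj i₀ j₀ := hedge _ _ hm₀ hne_e
  have hiffC : i₀ ∈ C ↔ j₀ ∈ C :=
    ⟨fun h => hclosed _ _ h hadj₀, fun h => hclosed _ _ h hadj₀.symm⟩
  have hij_mem : (i, j) ∈ (Z ×ˢ Zᶜ).filter (fun p => m p.1 p.2 ≠ 0) := by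
    simp only [mem_filter, mem_product, mem_compl]
    exact ⟨⟨hi, hj⟩, by omega⟩
  by_cases hj₀C : j₀ ∈ C
  · -- Case 2: witness inside the component of j; take W = Z ∩ C
    have hi₀C : i₀ ∈ C := hiffC.2 hj₀C
    refine ⟨Z ∩ C, ⟨i₀, mem_inter.2 ⟨hi₀, hi₀C⟩⟩, ?_, ?_, ?_⟩
    · intro h
      exact hj₀ (mem_inter.1 (h ▸ mem_univ j₀)).1
    · exact ⟨i₀, mem_inter.2 ⟨hi₀, hi₀C⟩, j₀, fun h => hj₀ (mem_inter.1 h).1, hm₀, hns₀⟩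
    · rw [kdeg_eq_sum_filter, kdeg_eq_sum_filter]
      refine Finset.sum_lt_sum_of_subset ?_ hij_mem ?_ (by simpa using hmij) (fun _ _ _ => Nat.zero_le _)
      · rintro ⟨a, b⟩ hab
        simp only [mem_filter, mem_product, mem_compl, mem_inter, not_and] at hab ⊢
        obtain ⟨⟨⟨haZ, haC⟩, hb⟩, hmab⟩ := hab
        refine ⟨⟨haZ, ?_⟩, hmab⟩
        intro hbZ
        have hbC : b ∉ C := hb hbZ
        by_cases he : s(a, b) = s(i, j)
        · rcases Sym2.eq_iff.1 he with ⟨h1, h2⟩ | ⟨h1, h2⟩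
          · exact hiC (h1 ▸ haC)
          · exact hj (h1 ▸ haZ)
        · exact hbC (hclosed _ _ haC (hedge _ _ (by omega) he))
      · intro h
        exact hiC (mem_inter.1 (mem_product.1 (mem_filter.1 h).1).1).2
  · -- Case 1: witness outside the component of j; take W = Z ∪ C
    have hi₀C : i₀ ∉ C := fun h => hj₀C (hiffC.1 h)
    refine ⟨Z ∪ C, ⟨i₀, mem_union.2 (Or.inl hi₀)⟩, ?_, ?_, ?_⟩
    · intro h
      rcases mem_union.1 (h ▸ mem_univ j₀) with h' | h'
      · exact hj₀ h'
      · exact hj₀C h'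
    · refine ⟨i₀, mem_union.2 (Or.inl hi₀), j₀, ?_, hm₀, hns₀⟩
      intro h
      rcases mem_union.1 h with h' | h'
      · exact hj₀ h'
      · exact hj₀C h'
    · rw [kdeg_eq_sum_filter, kdeg_eq_sum_filter]
      refine Finset.sum_lt_sum_of_subset ?_ hij_mem ?_ (by simpa using hmij) (fun _ _ _ => Nat.zero_le _)
      · rintro ⟨a, b⟩ hab
        simp only [mem_filter, mem_product, mem_compl, mem_union, not_or] at hab ⊢
        obtain ⟨⟨ha, ⟨hbZ, hbC⟩⟩, hmab⟩ := hab
        refine ⟨⟨?_, hbZ⟩, hmab⟩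
        rcases ha with haZ | haC
        · exact haZ
        · exfalso
          by_cases he : s(a, b) = s(i, j)
          · rcases Sym2.eq_iff.1 he with ⟨h1, h2⟩ | ⟨h1, h2⟩
            · exact hiC (h1 ▸ haC)
            · exact hbZ (h2 ▸ hi)
          · exact hbC (hclosed _ _ haC (hedge _ _ (by omega) he))
      · intro h
        exact (mem_compl.1 (mem_product.1 (mem_filter.1 h).1).2) (mem_union.2 (Or.inr hjC))

lemma key (m : V → V → ℕ) (hsym : ∀ i j, m i j = m j i) (hdiag : ∀ i, m i i = 0)
    (G : SimpleGraph V) (hG : ∀ i j, G.Adj i j ↔ i ≠ j ∧ 0 < m i j) :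
    ∀ n (Z : Finset V), kdeg m Z ≤ n → Z.Nonempty → Z ≠ univ →
    (∃ i ∈ Z, ∃ j, j ∉ Z ∧ 0 < m i j ∧ ¬ Separating m G i j) →
    ∃ W : Finset V, W.Nonempty ∧ W ≠ univ ∧
      (∀ i ∈ W, ∀ j, j ∉ W → 0 < m i j → ¬ Separating m G i j) ∧ kdeg m W ≤ kdeg m Z := by
  intro n
  induction n with
  | zero =>
    intro Z hk hne hpr hwit
    by_cases hall : ∀ i ∈ Z, ∀ j, j ∉ Z → 0 < m i j → ¬ Separating m G i j
    · exact ⟨Z, hne, hpr, hall, le_rfl⟩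
    · push_neg at hall
      obtain ⟨i, hi, j, hj, hm, hs⟩ := hall
      obtain ⟨W, _, _, _, hlt⟩ := step m hsym hdiag G hG Z hne hpr hwit ⟨i, hi, j, hj, hm, hs⟩
      omega
  | succ n ih =>
    intro Z hk hne hpr hwit
    by_cases hall : ∀ i ∈ Z, ∀ j, j ∉ Z → 0 < m i j → ¬ Separating m G i j
    · exact ⟨Z, hne, hpr, hall, le_rfl⟩
    · push_neg at hall
      obtain ⟨i, hi, j, hj, hm, hs⟩ := hall
      obtain ⟨W', hne', hpr', hwit', hlt⟩ :=
        step m hsym hdiag G hG Z hne hpr hwit ⟨i, hi, j, hj, hm, hs⟩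
      obtain ⟨W, h1, h2, h3, h4⟩ := ih W' (by omega) hne' hpr' hwit'
      exact ⟨W, h1, h2, h3, by omega⟩

lemma sInf_le_sInf_of_forall_exists_le {α : Type*} [CompleteLattice α] {s t : Set α}
    (h : ∀ x ∈ s, ∃ y ∈ t, y ≤ x) : sInf t ≤ sInf s :=
  le_sInf fun x hx => let ⟨_, hy, hyx⟩ := h x hx; (sInf_le hy).trans hyx

end Aux

/-- Remark 1.4, equivalence of the two definitions (ec) and (ec2) of essential connectivity:
the infimum of `k_Z` over `Z` with no separating node between `Z` and `Z'` equals the infimum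
of `k_Z` over `Z` with some non-separating node between `Z` and `Z'`. -/
theorem ec_eq_ec2 [Fintype V] [DecidableEq V] [Nonempty V]
    (m : V → V → ℕ) (hsym : ∀ i j, m i j = m j i) (hdiag : ∀ i, m i i = 0)
    (G : SimpleGraph V) (hG : ∀ i j, G.Adj i j ↔ i ≠ j ∧ 0 < m i j)
    (hconn : G.Connected) :
    sInf ((fun Z : Finset V => (kdeg m Z : ℕ∞)) ''
      {Z | Z.Nonempty ∧ Z ≠ Finset.univ ∧
        ∀ i ∈ Z, ∀ j, j ∉ Z → 0 < m i j → ¬ Separating m G i j}) =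
    sInf ((fun Z : Finset V => (kdeg m Z : ℕ∞)) ''
      {Z | Z.Nonempty ∧ Z ≠ Finset.univ ∧
        ∃ i ∈ Z, ∃ j, j ∉ Z ∧ 0 < m i j ∧ ¬ Separating m G i j}) := by
  apply le_antisymm
  · apply sInf_le_sInf_of_forall_exists_le
    rintro x ⟨Z, ⟨hne, hpr, hwit⟩, rfl⟩
    obtain ⟨W, h1, h2, h3, h4⟩ := key m hsym hdiag G hG (kdeg m Z) Z le_rfl hne hpr hwit
    exact ⟨(kdeg m W : ℕ∞), ⟨W, ⟨h1, h2, h3⟩, rfl⟩, by simpa using (Nat.cast_le (α := ℕ∞)).2 h4⟩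
  · apply sInf_le_sInf
    apply Set.image_mono
    rintro Z ⟨hne, hpr, hall⟩
    obtain ⟨i, hi, j, hj, hm⟩ := exists_cross m G hG hconn Z hne hpr
    exact ⟨hne, hpr, i, hi, j, hj, hm, hall i hi j hj hm⟩
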